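/- Let h : ℂ → ℂ be an entire function, and let (uₙ) be a sequence of nonzero complex numbers converging to 0 such that for every n there exists a constant cₙ ∈ ℂ with h(w + uₙ) = h(w) + cₙ for all w ∈ ℂ. Then there exist a, b ∈ ℂ such that h(w) = a·w + b for all w ∈ ℂ. If moreover h(w + 2πi) = h(w) for all w ∈ ℂ, then h is constant. -/

import Mathlib

/-- an entire function whose increments along a nonzero null sequence are
constant in `w` is affine-linear; if moreover it is `2πi`-periodic, it is constant. -/
theorem stmt_4 (h : ℂ → ℂ) (hh : Differentiable ℂ h)
    (u : ℕ → ℂ) (hu0 : ∀ n, u n ≠ 0)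
    (hu : Filter.Tendsto u Filter.atTop (nhds 0))
    (hc : ∀ n : ℕ, ∃ c : ℂ, ∀ w : ℂ, h (w + u n) = h w + c) :
    (∃ a b : ℂ, ∀ w : ℂ, h w = a * w + b) ∧
    ((∀ w : ℂ, h (w + 2 * Real.pi * Complex.I) = h w) → ∃ c : ℂ, ∀ w : ℂ, h w = c) := by
  set a := deriv h 0 with ha
  -- deriv h (u n) = deriv h 0
  have key : ∀ n, deriv h (u n) = a := by
    intro n
    obtain ⟨c, hcn⟩ := hc n
    have : deriv (fun w => h (w + u n)) 0 = deriv (fun w => h w + c) 0 := by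
      congr 1; ext w; exact hcn w
    have h1 : deriv (fun w => h (w + u n)) 0 = deriv h (u n) := by
      rw [deriv_comp_add_const]; simp
    have h2 : deriv (fun w => h w + c) 0 = deriv h 0 := by
      simp
    rw [h1, h2] at this; exact this
  -- identity theorem: deriv h ≡ a
  have hda : ∀ z : ℂ, deriv h z = a := by
    have hfreq : ∃ᶠ z in nhdsWithin 0 {(0:ℂ)}ᶜ, deriv h z = a := by
      have htend : Filter.Tendsto u Filter.atTop (nhdsWithin 0 {(0:ℂ)}ᶜ) := by
        exact tendsto_nhdsWithin_of_tendsto_nhds_of_eventually_within u hu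
          (Filter.Eventually.of_forall fun n => hu0 n)
      exact htend.frequently (Filter.Frequently.of_forall key)
    have h1 : AnalyticOnNhd ℂ (deriv h) Set.univ := by
      have h0 : AnalyticOnNhd ℂ h Set.univ := fun z _ => hh.analyticAt z
      exact h0.deriv
    have h2 : AnalyticOnNhd ℂ (fun _ : ℂ => a) Set.univ := fun z _ => analyticAt_const
    have := h1.eqOn_of_preconnected_of_frequently_eq h2 isPreconnected_univ
      (Set.mem_univ 0) hfreq
    exact fun z => this (Set.mem_univ z)
  -- h w = a * w + h 0
  have hlin : ∀ w : ℂ, h w = a * w + h 0 := by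
    have hg : Differentiable ℂ (fun w : ℂ => h w - a * w) :=
      hh.sub (differentiable_const _ |>.mul differentiable_id)
    have hg' : ∀ w : ℂ, deriv (fun w : ℂ => h w - a * w) w = 0 := by
      intro w
      rw [deriv_fun_sub (hh w) (by fun_prop), hda w]
      rw [deriv_const_mul_field, deriv_id'', mul_one, sub_self]
    intro w
    have := is_const_of_deriv_eq_zero hg hg' w 0
    simp at this
    linear_combination this
  constructor
  · exact ⟨a, h 0, hlin⟩
  · intro hper
    have h1 := hper 0
    rw [hlin (0 + 2 * Real.pi * Complex.I), hlin 0] at h1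
    have hne : (2 * Real.pi * Complex.I : ℂ) ≠ 0 := by
      simp [Real.pi_ne_zero, Complex.I_ne_zero]
    have ha0 : a = 0 := by
      have h2 : a * (2 * Real.pi * Complex.I) = 0 := by linear_combination h1
      rcases mul_eq_zero.1 h2 with h3 | h3
      · exact h3
      · exact absurd h3 hne
    exact ⟨h 0, fun w => by rw [hlin w, ha0]; ring⟩
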